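/- Let B ∈ S^n and let X̄ ∈ S^n_+ with rank(X̄) = r ≥ 1. If ⟨B, X̄⟩ ≥ 0, then there exist x_1, …, x_r ∈ ℝ^n such that X̄ = Σ_{i=1}^r x_i·x_iᵀ and x_iᵀ·B·x_i ≥ 0 for every i ∈ {1,…,r}. If moreover ⟨B, X̄⟩ = 0, then the x_i can be chosen so that X̄ = Σ_{i=1}^r x_i·x_iᵀ and x_iᵀ·B·x_i = 0 for every i ∈ {1,…,r}. -/

import Mathlib

open Matrix

noncomputable section

def qf (n : ℕ) (B : Matrix (Fin n) (Fin n) ℝ) (v : Fin n → ℝ) : ℝ :=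
  dotProduct v (B.mulVec v)

lemma sum_update' {ι M : Type*} [Fintype ι] [DecidableEq ι] [AddCommGroup M]
    (f : ι → M) (i : ι) (a : M) :
    ∑ k, Function.update f i a k = ∑ k, f k + a - f i := by
  rw [Finset.sum_update_of_mem (Finset.mem_univ i),
    Finset.sdiff_singleton_eq_erase, Finset.sum_erase_eq_sub (Finset.mem_univ i)]
  abel

lemma rot_outer (n : ℕ) (a b : Fin n → ℝ) (t : ℝ) :
    vecMulVec (fun k => Real.cos t * a k + Real.sin t * b k)
        (fun k => Real.cos t * a k + Real.sin t * b k) +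
      vecMulVec (fun k => -Real.sin t * a k + Real.cos t * b k)
        (fun k => -Real.sin t * a k + Real.cos t * b k) =
    vecMulVec a a + vecMulVec b b := by
  ext i j
  simp only [Matrix.add_apply, vecMulVec_apply]
  linear_combination (a i * a j + b i * b j) * Real.sin_sq_add_cos_sq t

lemma rot_quad (n : ℕ) (B : Matrix (Fin n) (Fin n) ℝ) (a b : Fin n → ℝ) (t : ℝ) :
    qf n B (fun k => Real.cos t * a k + Real.sin t * b k) +
      qf n B (fun k => -Real.sin t * a k + Real.cos t * b k) =
    qf n B a + qf n B b := by
  simp only [qf, dotProduct, mulVec, Finset.mul_sum, ← Finset.sum_add_distrib]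
  congr 1; ext i
  congr 1; ext j
  linear_combination (a i * a j * (B i j) + b i * b j * (B i j)) * Real.sin_sq_add_cos_sq t

lemma exists_rot (n : ℕ) (B : Matrix (Fin n) (Fin n) ℝ) (a b : Fin n → ℝ) (δ : ℝ)
    (ha : qf n B a < δ) (hb : δ < qf n B b) :
    ∃ t : ℝ, qf n B (fun k => Real.cos t * a k + Real.sin t * b k) = δ := by
  set f : ℝ → ℝ := fun t => qf n B (fun k => Real.cos t * a k + Real.sin t * b k) with hf
  have hcont : Continuous f := by
    simp only [hf, qf, dotProduct, mulVec]
    fun_prop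
  have hf0 : f 0 = qf n B a := by simp [hf]
  have hf1 : f (Real.pi / 2) = qf n B b := by simp [hf]
  have hmem : δ ∈ Set.Icc (f 0) (f (Real.pi / 2)) := by
    rw [hf0, hf1]; exact ⟨le_of_lt ha, le_of_lt hb⟩
  obtain ⟨t, _, ht⟩ :=
    intermediate_value_Icc (by positivity : (0:ℝ) ≤ Real.pi / 2) hcont.continuousOn hmem
  exact ⟨t, ht⟩

lemma balance (n : ℕ) (B : Matrix (Fin n) (Fin n) ℝ) (δ : ℝ) :
    ∀ (m : ℕ) (p : Fin m → Fin n → ℝ),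
      (∑ i, qf n B (p i)) = m * δ →
      ∃ x : Fin m → Fin n → ℝ,
        (∑ i, vecMulVec (x i) (x i)) = (∑ i, vecMulVec (p i) (p i)) ∧
        ∀ i, qf n B (x i) = δ := by
  intro m
  induction m with
  | zero => exact fun p _ => ⟨p, rfl, fun i => i.elim0⟩
  | succ m ih =>
    intro p hsum
    -- Step 1: find p1 with same sums and some index achieving δ
    have claim : ∃ p1 : Fin (m + 1) → Fin n → ℝ,
        (∑ k, vecMulVec (p1 k) (p1 k)) = (∑ k, vecMulVec (p k) (p k)) ∧
        (∑ k, qf n B (p1 k)) = (m + 1 : ℕ) * δ ∧ ∃ i, qf n B (p1 i) = δ := by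
      by_cases hc : ∃ i, qf n B (p i) = δ
      · exact ⟨p, rfl, hsum, hc⟩
      · push_neg at hc
        have hne : (Finset.univ : Finset (Fin (m + 1))).Nonempty := Finset.univ_nonempty
        have hconst : ∑ _k : Fin (m + 1), δ = (m + 1 : ℕ) * δ := by
          simp [Finset.sum_const, mul_comm]
        have hlt : ∃ i, qf n B (p i) < δ := by
          by_contra h
          push_neg at h
          have : ∀ k ∈ Finset.univ, δ < qf n B (p k) :=
            fun k _ => lt_of_le_of_ne (h k) (Ne.symm (hc k))
          have := Finset.sum_lt_sum_of_nonempty hne this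
          rw [hconst, hsum] at this
          exact lt_irrefl _ this
        have hgt : ∃ j, δ < qf n B (p j) := by
          by_contra h
          push_neg at h
          have : ∀ k ∈ Finset.univ, qf n B (p k) < δ :=
            fun k _ => lt_of_le_of_ne (h k) (hc k)
          have := Finset.sum_lt_sum_of_nonempty hne this
          rw [hconst, hsum] at this
          exact lt_irrefl _ this
        obtain ⟨i, hi⟩ := hlt
        obtain ⟨j, hj⟩ := hgt
        have hij : i ≠ j := fun h => by rw [h] at hi; linarith
        obtain ⟨t, ht⟩ := exists_rot n B (p i) (p j) δ hi hj
        set u : Fin n → ℝ := fun k => Real.cos t * p i k + Real.sin t * p j k with hu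
        set v : Fin n → ℝ := fun k => -Real.sin t * p i k + Real.cos t * p j k with hv
        set p1 := Function.update (Function.update p i u) j v with hp1
        have hp1i : p1 i = u := by
          rw [hp1, Function.update_of_ne hij, Function.update_self]
        have hp1j : p1 j = v := by rw [hp1, Function.update_self]
        have houter : vecMulVec u u + vecMulVec v v =
            vecMulVec (p i) (p i) + vecMulVec (p j) (p j) := rot_outer n (p i) (p j) t
        have hquad : qf n B u + qf n B v = qf n B (p i) + qf n B (p j) :=
          rot_quad n B (p i) (p j) t
        have key : ∀ (M : Type) (_ : AddCommGroup M) (g : (Fin n → ℝ) → M),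
              (∑ k, g (p1 k)) = ∑ k, g (p k) + (g u + g v) - (g (p i) + g (p j)) := by
            intro M _ g
            have e1 : ∀ k, g (p1 k) =
                Function.update (Function.update (fun k => g (p k)) i (g u)) j (g v) k := by
              intro k
              rw [hp1]
              simp only [Function.update_apply]
              split_ifs <;> rfl
            rw [Finset.sum_congr rfl (fun k _ => e1 k), sum_update', sum_update',
              Function.update_of_ne (Ne.symm hij)]
            abel
        refine ⟨p1, ?_, ?_, ⟨i, by rw [hp1i]; exact ht⟩⟩
        · rw [key _ inferInstance (fun w => vecMulVec w w)]
          rw [houter]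
          abel
        · rw [key _ inferInstance (fun w => qf n B w)]
          rw [hquad, hsum]
          ring
    obtain ⟨p1, h1, h2, i, hi⟩ := claim
    set w : Fin m → Fin n → ℝ := fun k => p1 (i.succAbove k) with hw
    have hsw : (∑ k, qf n B (w k)) = m * δ := by
      have := Fin.sum_univ_succAbove (fun k => qf n B (p1 k)) i
      rw [h2, hi] at this
      have : (∑ k : Fin m, qf n B (p1 (i.succAbove k))) = (m + 1 : ℕ) * δ - δ := by linarith
      rw [hw]; rw [this]; push_cast; ring
    obtain ⟨x', hx1, hx2⟩ := ih w hsw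
    refine ⟨Fin.cons (p1 i) x', ?_, ?_⟩
    · rw [Fin.sum_univ_succ]
      simp only [Fin.cons_zero, Fin.cons_succ]
      rw [hx1]
      exact (Fin.sum_univ_succAbove (fun k => vecMulVec (p1 k) (p1 k)) i).symm.trans h1
    · intro k
      refine Fin.cases ?_ ?_ k
      · simpa using hi
      · intro k'; simpa using hx2 k'


lemma psd_decomp (n : ℕ) (Xb : Matrix (Fin n) (Fin n) ℝ) (hXb : Xb.PosSemidef)
    (r : ℕ) (hrank : Xb.rank = r) :
    ∃ p : Fin r → Fin n → ℝ, Xb = ∑ i, vecMulVec (p i) (p i) := by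
  have hH : Xb.IsHermitian := hXb.isHermitian
  set lam := hH.eigenvalues with hlam
  have hnn : ∀ i, 0 ≤ lam i := hXb.eigenvalues_nonneg
  set U := (hH.eigenvectorUnitary : Matrix (Fin n) (Fin n) ℝ) with hU
  set g : Fin n → Fin n → ℝ := fun k i => Real.sqrt (lam k) * U i k with hg
  have hdecomp : Xb = ∑ k, vecMulVec (g k) (g k) := by
    conv_lhs => rw [hH.spectral_theorem]
    ext i j
    simp only [Unitary.conjStarAlgAut_apply, Matrix.sum_apply, vecMulVec_apply, hg, mul_apply, diagonal_apply,
      Function.comp_apply, RCLike.ofReal_real_eq_id, id_eq, mul_ite, mul_zero,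
      Finset.sum_ite_eq', Finset.mem_univ, if_true, Matrix.star_apply, star_trivial]
    refine Finset.sum_congr rfl fun k _ => ?_
    linear_combination (-(U i k * U j k)) * Real.mul_self_sqrt (hnn k)
  have hzero : ∀ k, lam k = 0 → vecMulVec (g k) (g k) = 0 := by
    intro k hk
    ext i j
    simp [hg, hk, vecMulVec_apply]
  have hcard : Fintype.card {k // lam k ≠ 0} = r := by
    rw [← hH.rank_eq_card_non_zero_eigs, hrank]
  set e := Fintype.equivFinOfCardEq hcard with he
  refine ⟨fun i => g (e.symm i), ?_⟩
  have h1 : ∑ i : Fin r, vecMulVec (g (e.symm i)) (g (e.symm i)) =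
      ∑ k : {k // lam k ≠ 0}, vecMulVec (g k) (g k) :=
    Equiv.sum_comp e.symm (fun k : {k // lam k ≠ 0} => vecMulVec (g (k : Fin n)) (g (k : Fin n)))
  have h2 : ∑ k ∈ Finset.univ.filter (fun k => lam k ≠ 0), vecMulVec (g k) (g k) =
      ∑ k : {k // lam k ≠ 0}, vecMulVec (g k) (g k) :=
    Finset.sum_subtype _ (by simp) _
  have h3 : ∑ k ∈ Finset.univ.filter (fun k => lam k ≠ 0), vecMulVec (g k) (g k) =
      ∑ k, vecMulVec (g k) (g k) :=
    Finset.sum_filter_of_ne (fun k _ h => fun h0 => h (hzero k h0))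
  rw [hdecomp, ← h3, h2, ← h1]

lemma trace_mul_vecMulVec (n : ℕ) (B : Matrix (Fin n) (Fin n) ℝ) (x : Fin n → ℝ) :
    (B * vecMulVec x x).trace = dotProduct x (B.mulVec x) := by
  simp only [trace, diag, mul_apply, vecMulVec_apply, dotProduct, mulVec, Finset.mul_sum]
  refine Finset.sum_congr rfl fun i _ => ?_
  refine Finset.sum_congr rfl fun j _ => ?_; ring

/-- rank-one decomposition lemma (Ye–Zhang / Sturm–Zhang). -/
theorem stmt_2 (n : ℕ) (B Xb : Matrix (Fin n) (Fin n) ℝ) (hBsym : B.IsSymm)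
    (hXb : Xb.PosSemidef) (r : ℕ) (hrank : Xb.rank = r) (hr1 : 1 ≤ r)
    (hBX : 0 ≤ (B * Xb).trace) :
    (∃ x : Fin r → Fin n → ℝ,
      Xb = ∑ i, vecMulVec (x i) (x i) ∧
      ∀ i, 0 ≤ dotProduct (x i) (B.mulVec (x i))) ∧
    ((B * Xb).trace = 0 →
      ∃ x : Fin r → Fin n → ℝ,
        Xb = ∑ i, vecMulVec (x i) (x i) ∧
        ∀ i, dotProduct (x i) (B.mulVec (x i)) = 0) := by
  obtain ⟨p, hp⟩ := psd_decomp n Xb hXb r hrank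
  have htr : (B * Xb).trace = ∑ i, qf n B (p i) := by
    rw [hp, Matrix.mul_sum, trace_sum]
    exact Finset.sum_congr rfl fun i _ => trace_mul_vecMulVec n B (p i)
  have hr0 : (r : ℝ) ≠ 0 := Nat.cast_ne_zero.mpr (by omega)
  set δ : ℝ := (B * Xb).trace / r with hδ
  have hsum : (∑ i, qf n B (p i)) = (r : ℕ) * δ := by
    rw [← htr, hδ]
    field_simp
  obtain ⟨x, hx1, hx2⟩ := balance n B δ r p hsum
  have hXx : Xb = ∑ i, vecMulVec (x i) (x i) := hp.trans hx1.symm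
  constructor
  · refine ⟨x, hXx, fun i => ?_⟩
    have : qf n B (x i) = δ := hx2 i
    have hδnn : 0 ≤ δ := div_nonneg hBX (Nat.cast_nonneg r)
    rw [show dotProduct (x i) (B.mulVec (x i)) = qf n B (x i) from rfl, this]
    exact hδnn
  · intro h0
    refine ⟨x, hXx, fun i => ?_⟩
    rw [show dotProduct (x i) (B.mulVec (x i)) = qf n B (x i) from rfl, hx2 i, hδ, h0,
      zero_div]
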